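/- Every quotient map q : X → Y from a k_ω-space X onto a Hausdorff space Y is a compact-cover map, i.e., for every compact set C ⊆ Y there exists a compact set K ⊆ X with q(K) = C. -/

import Mathlib

open Set Topology

/-- A `k_ω`-structure on a topological space `X`: a countable cover by compact sets
such that a set is closed iff its intersection with each `K n` is closed in `K n`. -/
def IsKOmegaStructure {X : Type*} [TopologicalSpace X] (K : ℕ → Set X) : Prop :=
  (∀ n, IsCompact (K n)) ∧ (⋃ n, K n) = Set.univ ∧
    ∀ F : Set X, IsClosed F ↔ ∀ n, IsClosed (((↑) : K n → X) ⁻¹' F)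

/-- A compact-cover map: a continuous surjection such that every compact subset of the
codomain is the image of a compact subset of the domain. -/
def IsCompactCoverMap {X Y : Type*} [TopologicalSpace X] [TopologicalSpace Y]
    (f : X → Y) : Prop :=
  Continuous f ∧ Function.Surjective f ∧
    ∀ C : Set Y, IsCompact C → ∃ K : Set X, IsCompact K ∧ f '' K = C

theorem stmt4 {X Y : Type*} [TopologicalSpace X] [TopologicalSpace Y] [T2Space X] [T2Space Y]
    (q : X → Y) (hq : IsQuotientMap q) (hX : ∃ K : ℕ → Set X, IsKOmegaStructure K) :
    IsCompactCoverMap q := by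
  obtain ⟨K, hKc, hKu, hKcl⟩ := hX
  refine ⟨hq.continuous, hq.surjective, fun C hC => ?_⟩
  -- monotone compact cover
  set L : ℕ → Set X := fun n => ⋃ i ∈ Finset.range (n + 1), K i with hL
  have hLc : ∀ n, IsCompact (L n) := fun n =>
    (Finset.range (n + 1)).isCompact_biUnion (fun i _ => hKc i)
  have hKL : ∀ n, K n ⊆ L n := fun n =>
    Set.subset_biUnion_of_mem (Finset.self_mem_range_succ n)
  have hLmono : Monotone L := by
    intro m n hmn x hx
    simp only [hL, Set.mem_iUnion, Finset.mem_range] at hx ⊢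
    obtain ⟨i, hi, hxi⟩ := hx
    exact ⟨i, by omega, hxi⟩
  -- key claim: C ⊆ q '' L n for some n
  have key : ∃ n, C ⊆ q '' L n := by
    by_contra h
    push_neg at h
    simp only [Set.not_subset] at h
    choose y hyC hyL using h
    set A : Set Y := Set.range y with hA
    -- every subset of A is closed
    have hsub : ∀ B ⊆ A, IsClosed B := by
      intro B hB
      rw [← hq.isClosed_preimage]
      rw [hKcl]
      intro n
      -- B ∩ q '' L n is finite
      have hfin : (B ∩ q '' L n).Finite := by
        apply Set.Finite.subset ((Set.finite_Iio n).image y)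
        rintro z ⟨hzB, hzL⟩
        obtain ⟨m, rfl⟩ := hB hzB
        have hm : m ∈ Set.Iio n := by
          by_contra hm
          simp only [Set.mem_Iio, not_lt] at hm
          exact hyL m (Set.image_mono (f := q) (hLmono hm) hzL)
        exact Set.mem_image_of_mem y hm
      have heq : ((↑) : K n → X) ⁻¹' (q ⁻¹' B)
          = ((↑) : K n → X) ⁻¹' (q ⁻¹' (B ∩ q '' L n)) := by
        ext ⟨x, hx⟩
        simp only [Set.mem_preimage, Set.mem_inter_iff]
        exact ⟨fun hb => ⟨hb, ⟨x, hKL n hx, rfl⟩⟩, fun hb => hb.1⟩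
      rw [heq]
      exact (hfin.isClosed.preimage hq.continuous).preimage continuous_subtype_val
    have hAclosed : IsClosed A := hsub A subset_rfl
    have hAC : A ⊆ C := by rintro z ⟨m, rfl⟩; exact hyC m
    have hAcomp : IsCompact A := hC.of_isClosed_subset hAclosed hAC
    have hAdisc : DiscreteTopology A := by
      rw [discreteTopology_iff_forall_isClosed]
      intro s
      have : IsClosed (((↑) : A → Y) '' s) :=
        hsub _ (by rintro z ⟨⟨w, hw⟩, _, rfl⟩; exact hw)
      have := this.preimage (continuous_subtype_val : Continuous ((↑) : A → Y))
      convert this using 1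
      ext ⟨z, hz⟩
      simp only [Set.mem_preimage]
      constructor
      · intro hs; exact ⟨⟨z, hz⟩, hs, rfl⟩
      · rintro ⟨⟨w, hw⟩, hws, hwz⟩
        have : (⟨w, hw⟩ : A) = ⟨z, hz⟩ := Subtype.ext hwz
        rwa [← this]
    have hAfin : A.Finite := hAcomp.finite (isDiscrete_iff_discreteTopology.mpr hAdisc)
    -- each point of A lies in some q '' L n; by finiteness, all in one
    have hmem : ∀ z ∈ A, ∃ n, z ∈ q '' L n := by
      intro z _
      obtain ⟨x, rfl⟩ := hq.surjective z
      have : x ∈ ⋃ n, K n := hKu ▸ Set.mem_univ x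
      obtain ⟨n, hn⟩ := Set.mem_iUnion.mp this
      exact ⟨n, Set.mem_image_of_mem q (hKL n hn)⟩
    choose! f hf using hmem
    obtain ⟨N, hN⟩ := (hAfin.image f).bddAbove
    have : y N ∈ q '' L N := by
      have h1 := hf (y N) ⟨N, rfl⟩
      have h2 : f (y N) ≤ N := hN (Set.mem_image_of_mem f ⟨N, rfl⟩)
      exact Set.image_mono (f := q) (hLmono h2) h1
    exact hyL N this
  obtain ⟨n, hn⟩ := key
  refine ⟨L n ∩ q ⁻¹' C, (hLc n).inter_right (hC.isClosed.preimage hq.continuous), ?_⟩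
  apply Set.Subset.antisymm
  · rintro z ⟨x, ⟨_, hx⟩, rfl⟩; exact hx
  · intro c hc
    obtain ⟨x, hxL, rfl⟩ := hn hc
    exact ⟨x, ⟨hxL, hc⟩, rfl⟩
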